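/- Let T be an n×n complex matrix and α ∈ ℝ. Then SRG(T − αI) = SRG(T) − α, i.e. the SRG of the shifted operator is the translate of SRG(T) by −α. -/

import Mathlib

open scoped InnerProductSpace
open Matrix

/-- The scaled relative graph (SRG) of an `n × n` complex matrix `T`:
the polar points of all input-output pairs `(x, Tx)` with `‖x‖ = 1`
(both sign choices of the angle), together with `0` when `Tx = 0` for a unit `x`. -/
noncomputable def srg {n : ℕ} (T : Matrix (Fin n) (Fin n) ℂ) : Set ℂ :=
  {w : ℂ | ∃ x : EuclideanSpace ℂ (Fin n), ‖x‖ = 1 ∧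
    ((Matrix.toEuclideanLin T x ≠ 0 ∧
      (w = ((‖Matrix.toEuclideanLin T x‖ / ‖x‖ : ℝ) : ℂ) *
          Complex.exp (Complex.I * (Real.arccos ((⟪x, Matrix.toEuclideanLin T x⟫_ℂ).re /
            (‖Matrix.toEuclideanLin T x‖ * ‖x‖)) : ℝ)) ∨
       w = ((‖Matrix.toEuclideanLin T x‖ / ‖x‖ : ℝ) : ℂ) *
          Complex.exp (-(Complex.I * (Real.arccos ((⟪x, Matrix.toEuclideanLin T x⟫_ℂ).re /
            (‖Matrix.toEuclideanLin T x‖ * ‖x‖)) : ℝ))))) ∨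
     (Matrix.toEuclideanLin T x = 0 ∧ w = 0))}

private lemma polar_plus (r c : ℝ) (hr : 0 < r) (hc : |c| ≤ r) :
    (r:ℂ) * Complex.exp (Complex.I * (Real.arccos (c/r) : ℝ)) =
      Complex.mk c (Real.sqrt (r^2 - c^2)) := by
  have h1 : -1 ≤ c / r := by
    rw [neg_le, ← neg_div]; exact div_le_one_of_le₀ (by linarith [abs_le.mp hc]) hr.le
  have h2 : c / r ≤ 1 := div_le_one_of_le₀ (le_of_abs_le hc) hr.le
  rw [mul_comm Complex.I, Complex.exp_mul_I, ← Complex.ofReal_cos, ← Complex.ofReal_sin,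
    Real.cos_arccos h1 h2, Real.sin_arccos]
  have e : 1 - (c/r)^2 = (r^2-c^2)/r^2 := by field_simp
  have hs : Real.sqrt (1 - (c/r)^2) = Real.sqrt (r^2 - c^2) / r := by
    rw [e, Real.sqrt_div' _ (by positivity), Real.sqrt_sq hr.le]
  rw [hs]
  apply Complex.ext <;> simp [Complex.mul_re, Complex.mul_im] <;> field_simp

private lemma polar_minus (r c : ℝ) (hr : 0 < r) (hc : |c| ≤ r) :
    (r:ℂ) * Complex.exp (-(Complex.I * (Real.arccos (c/r) : ℝ))) =
      Complex.mk c (-Real.sqrt (r^2 - c^2)) := by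
  have h := polar_plus r c hr hc
  have hconj : Complex.exp (-(Complex.I * (Real.arccos (c/r) : ℝ))) =
      starRingEnd ℂ (Complex.exp (Complex.I * (Real.arccos (c/r) : ℝ))) := by
    rw [← Complex.exp_conj]; congr 1
    simp [Complex.conj_I]
  rw [hconj, ← Complex.conj_ofReal r, ← _root_.map_mul, h]
  apply Complex.ext <;> simp

private lemma re_abs_le {n : ℕ} (x y : EuclideanSpace ℂ (Fin n)) (hx : ‖x‖ = 1) :
    |(⟪x, y⟫_ℂ).re| ≤ ‖y‖ := by
  have h2 := norm_inner_le_norm (𝕜 := ℂ) x y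
  calc |(⟪x, y⟫_ℂ).re| ≤ ‖(⟪x, y⟫_ℂ)‖ := Complex.abs_re_le_norm _
    _ ≤ ‖x‖ * ‖y‖ := h2
    _ = ‖y‖ := by rw [hx, one_mul]

/-- Characterization of membership in the SRG. -/
private lemma mem_srg_iff {n : ℕ} (T : Matrix (Fin n) (Fin n) ℂ) (w : ℂ) :
    w ∈ srg T ↔ ∃ x : EuclideanSpace ℂ (Fin n), ‖x‖ = 1 ∧
      (w = Complex.mk ((⟪x, Matrix.toEuclideanLin T x⟫_ℂ).re)
          (Real.sqrt (‖Matrix.toEuclideanLin T x‖^2 - ((⟪x, Matrix.toEuclideanLin T x⟫_ℂ).re)^2)) ∨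
       w = Complex.mk ((⟪x, Matrix.toEuclideanLin T x⟫_ℂ).re)
          (-Real.sqrt (‖Matrix.toEuclideanLin T x‖^2 - ((⟪x, Matrix.toEuclideanLin T x⟫_ℂ).re)^2))) := by
  constructor
  · rintro ⟨x, hx, h⟩
    refine ⟨x, hx, ?_⟩
    set y := Matrix.toEuclideanLin T x with hy
    rcases h with ⟨hne, h⟩ | ⟨h0, h0'⟩
    · have hr : 0 < ‖y‖ := norm_pos_iff.mpr hne
      have hc : |(⟪x, y⟫_ℂ).re| ≤ ‖y‖ := re_abs_le x y hx
      rcases h with h | h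
      · left
        rw [h, hx, mul_one, div_one, polar_plus _ _ hr hc]
      · right
        rw [h, hx, mul_one, div_one, polar_minus _ _ hr hc]
    · left
      rw [h0', h0]
      simp [Complex.ext_iff]
  · rintro ⟨x, hx, h⟩
    refine ⟨x, hx, ?_⟩
    set y := Matrix.toEuclideanLin T x with hy
    by_cases hne : y = 0
    · right
      refine ⟨hne, ?_⟩
      rcases h with h | h <;> rw [h, hne] <;> simp [Complex.ext_iff]
    · left
      have hr : 0 < ‖y‖ := norm_pos_iff.mpr hne
      have hc : |(⟪x, y⟫_ℂ).re| ≤ ‖y‖ := re_abs_le x y hx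
      refine ⟨hne, ?_⟩
      rcases h with h | h
      · left
        rw [h, hx, mul_one, div_one, polar_plus _ _ hr hc]
      · right
        rw [h, hx, mul_one, div_one, polar_minus _ _ hr hc]

private lemma shift_apply {n : ℕ} (T : Matrix (Fin n) (Fin n) ℂ) (α : ℝ)
    (x : EuclideanSpace ℂ (Fin n)) :
    Matrix.toEuclideanLin (T - (α:ℂ) • 1) x = Matrix.toEuclideanLin T x - (α:ℂ) • x := by
  have h1 : Matrix.toEuclideanLin ((α:ℂ) • (1 : Matrix (Fin n) (Fin n) ℂ)) x = (α:ℂ) • x := by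
    ext i
    simp [Matrix.toEuclideanLin_apply, Matrix.smul_mulVec, Matrix.one_mulVec]
  rw [map_sub, LinearMap.sub_apply, h1]

private lemma re_shift {n : ℕ} (x y : EuclideanSpace ℂ (Fin n)) (α : ℝ) (hx : ‖x‖ = 1) :
    (⟪x, y - (α:ℂ) • x⟫_ℂ).re = (⟪x, y⟫_ℂ).re - α := by
  have h : ⟪x, x⟫_ℂ = 1 := by
    rw [inner_self_eq_norm_sq_to_K, hx]; norm_num
  rw [inner_sub_right, inner_smul_right, h, mul_one, Complex.sub_re, Complex.ofReal_re]

private lemma norm_shift {n : ℕ} (x y : EuclideanSpace ℂ (Fin n)) (α : ℝ) (hx : ‖x‖ = 1) :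
    ‖y - (α:ℂ) • x‖^2 = ‖y‖^2 - 2*α*(⟪x, y⟫_ℂ).re + α^2 := by
  rw [@norm_sub_sq ℂ, inner_smul_right, norm_smul, hx, ← inner_conj_symm x y]
  simp [RCLike.re_to_complex, Complex.mul_re]
  rw [← Complex.conj_re (⟪y, x⟫_ℂ), inner_conj_symm]
  ring

private lemma disc_shift {n : ℕ} (x y : EuclideanSpace ℂ (Fin n)) (α : ℝ) (hx : ‖x‖ = 1) :
    ‖y - (α:ℂ) • x‖^2 - ((⟪x, y - (α:ℂ) • x⟫_ℂ).re)^2 = ‖y‖^2 - ((⟪x, y⟫_ℂ).re)^2 := by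
  rw [norm_shift x y α hx, re_shift x y α hx]; ring

theorem srg_shift {n : ℕ} (T : Matrix (Fin n) (Fin n) ℂ) (α : ℝ) :
    srg (T - (α : ℂ) • (1 : Matrix (Fin n) (Fin n) ℂ)) =
      (fun w : ℂ => w - (α : ℂ)) '' srg T := by
  ext w
  simp only [Set.mem_image, mem_srg_iff]
  constructor
  · rintro ⟨x, hx, h⟩
    rw [shift_apply, disc_shift _ _ _ hx, re_shift _ _ _ hx] at h
    refine ⟨w + α, ⟨x, hx, ?_⟩, by ring⟩
    rcases h with h | h
    · left; rw [h]; apply Complex.ext <;> simp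
    · right; rw [h]; apply Complex.ext <;> simp
  · rintro ⟨v, ⟨x, hx, h⟩, hv⟩
    refine ⟨x, hx, ?_⟩
    rw [shift_apply, disc_shift _ _ _ hx, re_shift _ _ _ hx]
    subst hv
    rcases h with h | h
    · left; rw [h]; apply Complex.ext <;> simp
    · right; rw [h]; apply Complex.ext <;> simp
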